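/- Let ℓ be an integer with ℓ ≥ 2 and n_1, n_2, …, n_k any finite sequence of positive integers. Then M(ℓ, Σ_{i=1}^{k} n_i) ≥ Σ_{i=1}^{k} M(ℓ, n_i). -/

import Mathlib

/-- The set of values `(n² − Σ kᵢ²)/2 + 1` over tuples of nonnegative
integers summing to `n`; `M(ℓ,n)` is its greatest element. -/
def MSet (ℓ n : ℕ) : Set ℤ :=
  {d | ∃ k : Fin ℓ → ℕ, (∑ i, k i) = n ∧
    2 * (d - 1) = (n : ℤ) ^ 2 - ∑ i, ((k i : ℤ)) ^ 2}

lemma combineM (ℓ a b : ℕ) (hl : 2 ≤ ℓ) (ha : 0 < a) (hb : 0 < b)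
    {x y : ℤ} (hx : x ∈ MSet ℓ a) (hy : y ∈ MSet ℓ b) :
    ∃ z ∈ MSet ℓ (a + b), x + y ≤ z := by
  haveI : NeZero ℓ := ⟨by omega⟩
  obtain ⟨k, hk, hkx⟩ := hx
  obtain ⟨k', hk', hky⟩ := hy
  have hshift : ∀ i : Fin ℓ, ∑ t : Fin ℓ, k' (i + t) = b := by
    intro i
    rw [← hk']
    exact Fintype.sum_equiv (Equiv.addLeft i) _ _ (fun t => rfl)
  have hex : ∃ t : Fin ℓ, ∑ j, k j * k' (j + t) < a * b := by
    by_contra h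
    push_neg at h
    have htot : ∑ t : Fin ℓ, ∑ j, k j * k' (j + t) = a * b := by
      rw [Finset.sum_comm]
      calc ∑ j, ∑ t, k j * k' (j + t) = ∑ j, k j * b := by
            refine Finset.sum_congr rfl fun j _ => ?_
            rw [← Finset.mul_sum, hshift j]
        _ = a * b := by rw [← Finset.sum_mul, hk]
    have h2 : ℓ * (a * b) ≤ ∑ t : Fin ℓ, ∑ j, k j * k' (j + t) := by
      calc ℓ * (a * b) = ∑ _t : Fin ℓ, a * b := by
            simp [Finset.sum_const, Finset.card_univ]
        _ ≤ _ := Finset.sum_le_sum fun t _ => h t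
    rw [htot] at h2
    have hab : 0 < a * b := Nat.mul_pos ha hb
    nlinarith
  obtain ⟨t, ht⟩ := hex
  set m : Fin ℓ → ℕ := fun j => k j + k' (j + t) with hm
  have hshift2 : ∀ (f : ℕ → ℤ), ∑ j : Fin ℓ, f (k' (j + t)) = ∑ j : Fin ℓ, f (k' j) := by
    intro f
    exact Fintype.sum_equiv (Equiv.addRight t) _ _ (fun j => rfl)
  refine ⟨x + y - 1 + a * b - ∑ j, (k j : ℤ) * (k' (j + t) : ℤ), ⟨m, ?_, ?_⟩, ?_⟩
  · rw [Finset.sum_add_distrib, hk]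
    have := hshift2 (fun n => (n : ℤ))
    have h3 : ∑ j : Fin ℓ, k' (j + t) = b := by
      rw [← hk']
      exact Fintype.sum_equiv (Equiv.addRight t) _ _ (fun j => rfl)
    rw [h3]
  · have hsq : ∑ j : Fin ℓ, ((m j : ℤ)) ^ 2 =
        (∑ j, (k j : ℤ) ^ 2) + (∑ j, (k' j : ℤ) ^ 2)
          + 2 * ∑ j, (k j : ℤ) * (k' (j + t) : ℤ) := by
      have expand : ∀ j : Fin ℓ, ((m j : ℤ)) ^ 2 =
          (k j : ℤ) ^ 2 + (k' (j + t) : ℤ) ^ 2 + 2 * ((k j : ℤ) * (k' (j + t) : ℤ)) := by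
        intro j; push_cast [hm]; ring
      rw [Finset.sum_congr rfl fun j _ => expand j]
      rw [Finset.sum_add_distrib, Finset.sum_add_distrib, ← Finset.mul_sum]
      rw [hshift2 (fun n => (n : ℤ) ^ 2)]
    rw [hsq]
    push_cast
    linarith
  · have hS : (∑ j, (k j : ℤ) * (k' (j + t) : ℤ)) ≤ (a : ℤ) * b - 1 := by
      have h1 : ((∑ j, k j * k' (j + t) : ℕ) : ℤ) + 1 ≤ (a : ℤ) * b := by
        exact_mod_cast ht
      have h2 : ((∑ j, k j * k' (j + t) : ℕ) : ℤ) = ∑ j, (k j : ℤ) * (k' (j + t) : ℤ) := by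
        push_cast; rfl
      linarith
    linarith

lemma auxM (ℓ : ℕ) (hl : 2 ≤ ℓ) :
    ∀ (k : ℕ) (nseq : Fin k → ℕ), (∀ i, 0 < nseq i) →
    ∀ (Ms : Fin k → ℤ), (∀ i, Ms i ∈ MSet ℓ (nseq i)) →
    ∃ z ∈ MSet ℓ (∑ i, nseq i), (∑ i, Ms i) ≤ z := by
  intro k
  induction k with
  | zero =>
    intro nseq _ Ms _
    refine ⟨1, ⟨fun _ => 0, by simp, by simp⟩, by simp⟩
  | succ n ih =>
    intro nseq hpos Ms hMs
    rcases Nat.eq_zero_or_pos n with rfl | hn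
    · refine ⟨Ms 0, ?_, le_of_eq ?_⟩
      · simpa [Fin.sum_univ_one] using hMs 0
      · simp [Fin.sum_univ_one]
    · obtain ⟨z', hz', hle⟩ := ih (fun i => nseq i.castSucc) (fun i => hpos _)
        (fun i => Ms i.castSucc) (fun i => hMs _)
      haveI : Nonempty (Fin n) := Fin.pos_iff_nonempty.mp hn
      have ha : 0 < ∑ i : Fin n, nseq i.castSucc :=
        Finset.sum_pos (fun i _ => hpos _) Finset.univ_nonempty
      obtain ⟨z, hz, hle2⟩ := combineM ℓ _ _ hl ha (hpos (Fin.last n)) hz' (hMs (Fin.last n))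
      refine ⟨z, ?_, ?_⟩
      · rwa [← Fin.sum_univ_castSucc] at hz
      · rw [Fin.sum_univ_castSucc]
        exact le_trans (add_le_add_left hle _) hle2

theorem stmt16 (ℓ : ℕ) (hl : 2 ≤ ℓ) (k : ℕ) (nseq : Fin k → ℕ)
    (hpos : ∀ i, 0 < nseq i) (Ms : Fin k → ℤ)
    (hMs : ∀ i, IsGreatest (MSet ℓ (nseq i)) (Ms i))
    (Mtot : ℤ) (hMtot : IsGreatest (MSet ℓ (∑ i, nseq i)) Mtot) :
    (∑ i, Ms i) ≤ Mtot := by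
  obtain ⟨z, hz, hle⟩ := auxM ℓ hl k nseq hpos Ms (fun i => (hMs i).1)
  exact le_trans hle (hMtot.2 hz)
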